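/- Let R = μ₀R⁰ + Σ_{i=1}^m μᵢR^{Jᵢ} be a quasi-Clifford algebraic curvature tensor on a scalar product space (V,g), with Hurwitz-like constants satisfying cᵢ ≠ 0 for 1 ≤ i ≤ k and cᵢ = 0 for k < i ≤ m. Then for every nonnull X ∈ V and every Y ∈ V orthogonal to each of X, J₁X, …, J_kX, one has (𝒥_X − ε_X·μ₀·id)²(Y) = 0; in particular the restriction of 𝒥_X − ε_X·μ₀·id to the orthogonal complement of {X, J₁X, …, J_kX} is two-step nilpotent. -/

import Mathlib

open Module Finset

/-- The algebraic curvature tensor `R⁰` of constant sectional curvature one. -/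
def R0 {V : Type*} [AddCommGroup V] [Module ℝ V] (g : LinearMap.BilinForm ℝ V)
    (X Y Z W : V) : ℝ :=
  g Y Z * g X W - g X Z * g Y W

/-- The algebraic curvature tensor `R^J` generated by a `g`-skew-adjoint endomorphism `J`. -/
def RJ {V : Type*} [AddCommGroup V] [Module ℝ V] (g : LinearMap.BilinForm ℝ V)
    (J : V →ₗ[ℝ] V) (X Y Z W : V) : ℝ :=
  g (J X) Z * g (J Y) W - g (J Y) Z * g (J X) W + 2 * g (J X) Y * g (J Z) W
/-- for a quasi-Clifford curvature tensor with `cᵢ ≠ 0` for `i ≤ k` and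
`cᵢ = 0` for `i > k`, the operator `𝒥_X − ε_X μ₀ id` is two-step nilpotent on the
orthogonal complement of `{X, J₁X, …, J_kX}`, for every nonnull `X`. -/
theorem quasiClifford_two_step_nilpotent
    {V : Type*} [AddCommGroup V] [Module ℝ V] [FiniteDimensional ℝ V]
    (g : LinearMap.BilinForm ℝ V) (hsymm : ∀ x y, g x y = g y x) (hnd : g.Nondegenerate)
    {m : ℕ} (μ₀ : ℝ) (μ c : Fin m → ℝ) (J : Fin m → V →ₗ[ℝ] V)
    (hskew : ∀ i, ∀ x y : V, g (J i x) y = - g x (J i y))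
    (hhur : ∀ i j, J i ∘ₗ J j + J j ∘ₗ J i
      = ((if i = j then 2 * c i else 0 : ℝ) • LinearMap.id : V →ₗ[ℝ] V))
    (R : V → V → V → V → ℝ)
    (hR : ∀ X Y Z W, R X Y Z W = μ₀ * R0 g X Y Z W + ∑ i, μ i * RJ g (J i) X Y Z W)
    (Jac : V → V →ₗ[ℝ] V)
    (hJac : ∀ X Y Z, g (Jac X Y) Z = R Y X X Z)
    (k : ℕ) (hk : k ≤ m)
    (hc₁ : ∀ i : Fin m, (i : ℕ) < k → c i ≠ 0)
    (hc₂ : ∀ i : Fin m, k ≤ (i : ℕ) → c i = 0) :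
    ∀ X : V, g X X ≠ 0 → ∀ Y : V, g Y X = 0 → (∀ i : Fin m, (i : ℕ) < k → g Y (J i X) = 0) →
      (Jac X - (g X X * μ₀) • (LinearMap.id : V →ₗ[ℝ] V))
        ((Jac X - (g X X * μ₀) • (LinearMap.id : V →ₗ[ℝ] V)) Y) = 0 := by
  intro X hX Y hYX hYJ
  have hJX0 : ∀ i, g (J i X) X = 0 := by
    intro i
    have h1 := hskew i X X
    have h2 := hsymm (J i X) X
    linarith
  have hJJ : ∀ i j, g (J i X) (J j X) = if i = j then -(c i) * g X X else 0 := by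
    intro i j
    have h := congrArg (fun f : V →ₗ[ℝ] V => g X (f X)) (hhur i j)
    simp only [LinearMap.add_apply, LinearMap.comp_apply, LinearMap.smul_apply,
      LinearMap.id_apply, map_add, map_smul, smul_eq_mul] at h
    have e1 := hskew i X (J j X)
    have e2 := hskew j X (J i X)
    have e3 := hsymm (J j X) (J i X)
    by_cases hij : i = j
    · subst hij
      simp only [eq_self_iff_true, if_true] at h ⊢
      linarith
    · simp only [if_neg hij] at h ⊢
      linarith
  have key : ∀ W : V, Jac X W = (μ₀ * g X X) • W - (μ₀ * g W X) • X
      - ∑ i, (3 * μ i * g W (J i X)) • J i X := by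
    intro W
    refine sub_eq_zero.mp (hnd.1 _ fun Z => ?_)
    rw [map_sub, LinearMap.sub_apply, sub_eq_zero, hJac, hR]
    have hsum : ∀ i ∈ Finset.univ, μ i * RJ g (J i) W X X Z
        = -(3 * μ i * g W (J i X) * g (J i X) Z) := by
      intro i _
      simp only [RJ]
      rw [hJX0 i, hskew i W X]
      ring
    rw [Finset.sum_congr rfl hsum]
    simp only [R0, map_sub, LinearMap.sub_apply, map_smul, LinearMap.smul_apply,
      map_sum, LinearMap.sum_apply, smul_eq_mul, Finset.sum_neg_distrib]
    ring
  have hAJ : ∀ i : Fin m, k ≤ (i : ℕ) →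
      (Jac X - (g X X * μ₀) • (LinearMap.id : V →ₗ[ℝ] V)) (J i X) = 0 := by
    intro i hi
    have hz : ∀ j, g (J i X) (J j X) = 0 := by
      intro j
      rw [hJJ]
      by_cases hij : i = j
      · subst hij; simp [hc₂ i hi]
      · simp [hij]
    simp only [LinearMap.sub_apply, LinearMap.smul_apply, LinearMap.id_apply, key (J i X),
      hJX0 i, hz, mul_zero, zero_smul, sub_zero, smul_zero, Finset.sum_const_zero]
    rw [mul_comm (g X X) μ₀]
    abel
  have hAY : (Jac X - (g X X * μ₀) • (LinearMap.id : V →ₗ[ℝ] V)) Y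
      = - ∑ i, (3 * μ i * g Y (J i X)) • J i X := by
    simp only [LinearMap.sub_apply, LinearMap.smul_apply, LinearMap.id_apply, key Y,
      hYX, mul_zero, zero_smul, sub_zero]
    rw [mul_comm (g X X) μ₀]
    abel
  rw [hAY, map_neg, map_sum, neg_eq_zero]
  refine Finset.sum_eq_zero fun i _ => ?_
  rw [map_smul]
  by_cases hik : (i : ℕ) < k
  · rw [hYJ i hik]; simp
  · rw [hAJ i (le_of_not_gt hik), smul_zero]
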